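/- In the Jordan plane over a field of characteristic p > 2, the coproduct (in the braided Hopf algebra structure with x, y primitive) satisfies Δ(y^{pℓ}) = y^{pℓ} ⊗ 1 + 1 ⊗ y^{pℓ} + ∑_{t=1}^{ℓ−1} binom(ℓ,t) y^{pt} ⊗ y^{p(ℓ−t)} for all ℓ ≥ 1; in particular y^p and x^p are primitive. -/
import Mathlib


open scoped TensorProduct

/-- The raising factorial `[t]^{[k]} = t(t+1)⋯(t+k-1)`. -/
noncomputable def raise {K : Type*} [Field K] (t : K) (k : ℕ) : K :=
  ∏ i ∈ Finset.range k, (t + i)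

/-- Defining relation of the Jordan plane `k⟨x,y⟩/(yx - xy + (1/2)x²)`,
with `x = ι 0`, `y = ι 1`. -/
inductive JpRel (K : Type*) [Field K] :
    FreeAlgebra K (Fin 2) → FreeAlgebra K (Fin 2) → Prop
  | comm : JpRel K (FreeAlgebra.ι K (1 : Fin 2) * FreeAlgebra.ι K (0 : Fin 2))
      (FreeAlgebra.ι K (0 : Fin 2) * FreeAlgebra.ι K (1 : Fin 2)
        - (1/2 : K) • (FreeAlgebra.ι K (0 : Fin 2)) ^ 2)

/-- The Jordan plane. -/
noncomputable abbrev Jp (K : Type*) [Field K] := RingQuot (JpRel K)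

noncomputable abbrev Jx (K : Type*) [Field K] : Jp K :=
  RingQuot.mkAlgHom K (JpRel K) (FreeAlgebra.ι K (0 : Fin 2))
noncomputable abbrev Jy (K : Type*) [Field K] : Jp K :=
  RingQuot.mkAlgHom K (JpRel K) (FreeAlgebra.ι K (1 : Fin 2))

/-- In the Jordan plane over a field of characteristic `p > 2`, the braided coproduct
(given on `y^n` by
`Δ(y^n) = ∑_{k=0}^n ∑_{i=0}^k C(n,k) C(k,i)(-1)^i ([k-n]^{[i]}/2^i) x^i y^{k-i} ⊗ y^{n-k}`)
satisfies `Δ(y^{pℓ}) = y^{pℓ} ⊗ 1 + 1 ⊗ y^{pℓ} + ∑_{t=1}^{ℓ-1} C(ℓ,t) y^{pt} ⊗ y^{p(ℓ-t)}`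
for all `ℓ ≥ 1`; in particular `y^p` and `x^p` are primitive
(`Δ(x^n) = ∑_k C(n,k) x^{n-k} ⊗ x^k` collapses to `x^p ⊗ 1 + 1 ⊗ x^p` at `n = p`). -/
theorem stmt15 (p : ℕ) [Fact p.Prime] (hp2 : 2 < p) (K : Type*) [Field K] [CharP K p] :
    (∀ ℓ : ℕ, 1 ≤ ℓ →
      (∑ k ∈ Finset.range (p * ℓ + 1), ∑ i ∈ Finset.range (k + 1),
        (((p * ℓ).choose k : K) * (k.choose i : K) * (-1) ^ i *
            raise ((k : K) - (p : K) * (ℓ : K)) i / 2 ^ i) •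
          ((Jx K ^ i * Jy K ^ (k - i)) ⊗ₜ[K] (Jy K ^ (p * ℓ - k))))
        = (Jy K ^ (p * ℓ)) ⊗ₜ[K] (1 : Jp K) + (1 : Jp K) ⊗ₜ[K] (Jy K ^ (p * ℓ))
          + ∑ t ∈ Finset.Ioo 0 ℓ,
              (ℓ.choose t : K) • ((Jy K ^ (p * t)) ⊗ₜ[K] (Jy K ^ (p * (ℓ - t))))) ∧
    (∑ k ∈ Finset.range (p + 1), ((p.choose k : K)) • ((Jx K ^ (p - k)) ⊗ₜ[K] (Jx K ^ k)))
      = (Jx K ^ p) ⊗ₜ[K] (1 : Jp K) + (1 : Jp K) ⊗ₜ[K] (Jx K ^ p) := by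
  have hp : p.Prime := Fact.out
  have hp0 : 0 < p := hp.pos
  constructor
  · intro ℓ hℓ
    -- Lucas consequences
    have hcast0 : ∀ k : ℕ, ¬ p ∣ k → (((p * ℓ).choose k : K)) = 0 := by
      intro k hk
      have h : (p * ℓ).choose k ≡ Nat.choose ((p * ℓ) % p) (k % p)
          * Nat.choose ((p * ℓ) / p) (k / p) [MOD p] :=
        Choose.choose_modEq_choose_mod_mul_choose_div_nat
      rw [Nat.mul_mod_right] at h
      have hkmod : 0 < k % p := Nat.pos_of_ne_zero (fun h0 => hk (Nat.dvd_of_mod_eq_zero h0))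
      rw [Nat.choose_eq_zero_of_lt hkmod, zero_mul] at h
      have := CharP.natCast_eq_natCast' (R := K) (p := p) h
      simpa using this
    have hcastd : ∀ t : ℕ, (((p * ℓ).choose (p * t) : K)) = ((ℓ.choose t : K)) := by
      intro t
      have h : (p * ℓ).choose (p * t) ≡ Nat.choose ((p * ℓ) % p) ((p * t) % p)
          * Nat.choose ((p * ℓ) / p) ((p * t) / p) [MOD p] :=
        Choose.choose_modEq_choose_mod_mul_choose_div_nat
      rw [Nat.mul_mod_right, Nat.mul_mod_right, Nat.mul_div_cancel_left _ hp0,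
        Nat.mul_div_cancel_left _ hp0, Nat.choose_self, one_mul] at h
      exact CharP.natCast_eq_natCast' (R := K) (p := p) h
    have inner : ∀ k ∈ Finset.range (p * ℓ + 1),
        (∑ i ∈ Finset.range (k + 1),
          (((p * ℓ).choose k : K) * (k.choose i : K) * (-1) ^ i *
              raise ((k : K) - (p : K) * (ℓ : K)) i / 2 ^ i) •
            ((Jx K ^ i * Jy K ^ (k - i)) ⊗ₜ[K] (Jy K ^ (p * ℓ - k))))
        = (if p ∣ k then ((ℓ.choose (k / p) : K)) •
            ((Jy K ^ k) ⊗ₜ[K] (Jy K ^ (p * ℓ - k))) else 0) := by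
      intro k _
      by_cases hk : p ∣ k
      · rw [if_pos hk]
        rw [Finset.sum_eq_single_of_mem 0 (Finset.mem_range.2 (Nat.succ_pos k))]
        · have hck : (((p * ℓ).choose k : K)) = ((ℓ.choose (k / p) : K)) := by
            conv_lhs => rw [← Nat.mul_div_cancel' hk]
            exact hcastd (k / p)
          simp [raise, hck]
        · intro i _ hi
          have hkK : ((k : K)) = 0 := (CharP.cast_eq_zero_iff K p k).mpr hk
          have hpK : ((p : K)) = 0 := CharP.cast_eq_zero K p
          have hraise : raise ((k : K) - (p : K) * (ℓ : K)) i = 0 := by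
            rw [hkK, hpK]
            exact Finset.prod_eq_zero (Finset.mem_range.2 (Nat.pos_of_ne_zero hi)) (by simp)
          rw [hraise]
          simp
      · rw [if_neg hk]
        refine Finset.sum_eq_zero fun i _ => ?_
        rw [hcast0 k hk]
        simp
    rw [Finset.sum_congr rfl inner, ← Finset.sum_filter]
    have hbij : (∑ k ∈ (Finset.range (p * ℓ + 1)).filter (p ∣ ·),
          ((ℓ.choose (k / p) : K)) • ((Jy K ^ k) ⊗ₜ[K] (Jy K ^ (p * ℓ - k))))
        = ∑ t ∈ Finset.range (ℓ + 1),
          ((ℓ.choose t : K)) • ((Jy K ^ (p * t)) ⊗ₜ[K] (Jy K ^ (p * (ℓ - t)))) := by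
      refine (Finset.sum_nbij' (i := fun t => p * t) (j := fun k => k / p) ?_ ?_ ?_ ?_ ?_).symm
      · intro t ht
        simp only [Finset.mem_filter, Finset.mem_range] at *
        exact ⟨by nlinarith [Nat.lt_succ_iff.mp ht], Dvd.intro t rfl⟩
      · intro k hk
        simp only [Finset.mem_filter, Finset.mem_range] at *
        obtain ⟨hk1, hk2⟩ := hk
        have : k / p ≤ (p * ℓ) / p := Nat.div_le_div_right (Nat.lt_succ_iff.mp hk1)
        rw [Nat.mul_div_cancel_left _ hp0] at this
        omega
      · intro t _; exact Nat.mul_div_cancel_left _ hp0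
      · intro k hk
        simp only [Finset.mem_filter] at hk
        exact Nat.mul_div_cancel' hk.2
      · intro t _
        rw [Nat.mul_div_cancel_left _ hp0, Nat.mul_sub]
    rw [hbij]
    have hsplit : Finset.range (ℓ + 1) = insert 0 (insert ℓ (Finset.Ioo 0 ℓ)) := by
      ext a
      simp only [Finset.mem_range, Finset.mem_insert, Finset.mem_Ioo, Nat.lt_succ_iff]
      omega
    have h0notin : (0 : ℕ) ∉ insert ℓ (Finset.Ioo 0 ℓ) := by
      simp only [Finset.mem_insert, Finset.mem_Ioo]
      omega
    have hlnotin : ℓ ∉ Finset.Ioo 0 ℓ := by simp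
    rw [hsplit, Finset.sum_insert h0notin, Finset.sum_insert hlnotin]
    simp only [Nat.choose_self, Nat.choose_zero_right, Nat.cast_one, one_smul,
      Nat.mul_zero, Nat.sub_zero, Nat.sub_self, pow_zero]
    abel
  · have hsplit : Finset.range (p + 1) = insert 0 (insert p (Finset.Ioo 0 p)) := by
      ext a
      simp only [Finset.mem_range, Finset.mem_insert, Finset.mem_Ioo, Nat.lt_succ_iff]
      omega
    have h0notin : (0 : ℕ) ∉ insert p (Finset.Ioo 0 p) := by
      simp only [Finset.mem_insert, Finset.mem_Ioo]
      omega
    have hpnotin : p ∉ Finset.Ioo 0 p := by simp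
    rw [hsplit, Finset.sum_insert h0notin, Finset.sum_insert hpnotin]
    have hmid : (∑ k ∈ Finset.Ioo 0 p, ((p.choose k : K)) • ((Jx K ^ (p - k)) ⊗ₜ[K] (Jx K ^ k)))
        = 0 := by
      refine Finset.sum_eq_zero fun k hk => ?_
      simp only [Finset.mem_Ioo] at hk
      have : ((p.choose k : K)) = 0 := (CharP.cast_eq_zero_iff K p _).mpr
        (Nat.Prime.dvd_choose_self hp (by omega) hk.2)
      rw [this, zero_smul]
    rw [hmid]
    simp only [Nat.choose_self, Nat.choose_zero_right, Nat.cast_one, one_smul,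
      Nat.sub_zero, Nat.sub_self, pow_zero]
    abel
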